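/- Let M be a matroid with finite ground set and let F be a flat of M. Then F is a modular flat (i.e., for every flat G of M one has M.rk F + M.rk G = M.rk (F ∪ G) + M.rk (F ∩ G)) if and only if for all flats G and H of M with G ⊆ H one has M.closure ((F ∩ H) ∪ G) = M.closure (F ∪ G) ∩ H. -/

import Mathlib

open Matroid Set

/-- The rank of a set `X` in a matroid `M`: the largest cardinality of an independent
subset of `X`. -/
noncomputable def Matroid.rk {α : Type*} (M : Matroid α) (X : Set α) : ℕ :=
  sSup {n : ℕ | ∃ I, M.Indep I ∧ I ⊆ X ∧ I.ncard = n}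

namespace ModularAux

variable {α : Type*} {M : Matroid α} {I J B C X Y F G H K L : Set α}

lemma closure_flat (M : Matroid α) (X : Set α) : M.IsFlat (M.closure X) := by
  rw [Matroid.closure_def, sInter_eq_iInter]
  haveI hne : Nonempty ↑{F | M.IsFlat F ∧ X ∩ M.E ⊆ F} :=
    ⟨⟨M.E, M.ground_isFlat, inter_subset_right⟩⟩
  exact Matroid.IsFlat.iInter fun F ↦ F.2.1

lemma flat_inter (hF : M.IsFlat F) (hG : M.IsFlat G) : M.IsFlat (F ∩ G) := by
  rw [inter_eq_iInter]
  exact Matroid.IsFlat.iInter (by rintro (_ | _) <;> simpa)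

lemma rk_eq_ncard_of_basis' [M.Finite] (hI : M.IsBasis' I X) : M.rk X = I.ncard := by
  have hfin : ∀ J, M.Indep J → J.Finite := fun J hJ ↦ M.set_finite J hJ.subset_ground
  apply le_antisymm
  · refine csSup_le ⟨0, ∅, M.empty_indep, empty_subset _, by simp⟩ ?_
    rintro n ⟨J, hJ, hJX, rfl⟩
    obtain ⟨J', hJ', hJJ'⟩ := hJ.subset_isBasis'_of_subset hJX
    calc J.ncard ≤ J'.ncard := ncard_le_ncard hJJ' (hfin _ hJ'.indep)
      _ = I.ncard := by rw [ncard_def, hJ'.encard_eq_encard hI, ← ncard_def]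
  · refine le_csSup ⟨M.E.ncard, ?_⟩ ⟨I, hI.indep, hI.subset, rfl⟩
    rintro n ⟨J, hJ, _, rfl⟩
    exact ncard_le_ncard hJ.subset_ground M.ground_finite

lemma ncard_le_rk [M.Finite] (hI : M.Indep I) (hIX : I ⊆ X) : I.ncard ≤ M.rk X := by
  obtain ⟨J, hJ⟩ := M.exists_isBasis' X
  rw [rk_eq_ncard_of_basis' hJ]
  obtain ⟨J', hJ', hJJ'⟩ := hI.subset_isBasis'_of_subset hIX
  calc I.ncard ≤ J'.ncard :=
        ncard_le_ncard hJJ' (M.set_finite J' hJ'.indep.subset_ground)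
    _ = J.ncard := by rw [ncard_def, hJ'.encard_eq_encard hJ, ← ncard_def]

lemma rk_closure_eq [M.Finite] (X : Set α) :
    M.rk (M.closure X) = M.rk X := by
  obtain ⟨I, hI⟩ := M.exists_isBasis' X
  rw [rk_eq_ncard_of_basis' hI, rk_eq_ncard_of_basis' hI.isBasis_closure_right.isBasis']

lemma rk_eq_of_closure_eq [M.Finite] (h : M.closure X = M.closure Y) :
    M.rk X = M.rk Y := by
  rw [← rk_closure_eq (M := M) X, h, rk_closure_eq]

/-- Two nested flats with equal ranks are equal. -/
lemma flat_eq_of_subset_of_rk_le [M.Finite] (hK : M.IsFlat K) (hL : M.IsFlat L)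
    (hKL : K ⊆ L) (hr : M.rk L ≤ M.rk K) : K = L := by
  obtain ⟨I, hI⟩ := M.exists_isBasis K hK.subset_ground
  obtain ⟨J, hJ, hIJ⟩ := hI.indep.subset_isBasis_of_subset (hI.subset.trans hKL)
    hL.subset_ground
  have hfin : J.Finite := M.set_finite J hJ.indep.subset_ground
  have hIJ' : I = J := by
    refine Set.eq_of_subset_of_ncard_le hIJ ?_ hfin
    rw [← rk_eq_ncard_of_basis' hJ.isBasis', ← rk_eq_ncard_of_basis' hI.isBasis']
    exact hr
  refine hKL.antisymm ?_
  calc L ⊆ M.closure J := hJ.subset_closure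
    _ = M.closure I := by rw [hIJ']
    _ ⊆ M.closure K := M.closure_subset_closure hI.subset
    _ = K := hK.closure

/-- Submodularity of the rank function. -/
lemma rk_submod [M.Finite] (X Y : Set α) :
    M.rk (X ∪ Y) + M.rk (X ∩ Y) ≤ M.rk X + M.rk Y := by
  obtain ⟨I, hI⟩ := M.exists_isBasis' (X ∩ Y)
  obtain ⟨J, hJ, hIJ⟩ := hI.indep.subset_isBasis'_of_subset
    (hI.subset.trans (inter_subset_left.trans subset_union_left))
  have hJfin : J.Finite := M.set_finite J hJ.indep.subset_ground
  have h1 : M.rk (X ∪ Y) = J.ncard := rk_eq_ncard_of_basis' hJ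
  have h2 : M.rk (X ∩ Y) = I.ncard := rk_eq_ncard_of_basis' hI
  have hsub : I ⊆ J ∩ (X ∩ Y) := subset_inter hIJ hI.subset
  have hJX : (J ∩ X).ncard ≤ M.rk X := ncard_le_rk (hJ.indep.subset inter_subset_left)
    inter_subset_right
  have hJY : (J ∩ Y).ncard ≤ M.rk Y := ncard_le_rk (hJ.indep.subset inter_subset_left)
    inter_subset_right
  have hunion : (J ∩ X) ∪ (J ∩ Y) = J := by
    rw [← inter_union_distrib_left, inter_eq_left]
    exact hJ.subset
  have hinter : (J ∩ X) ∩ (J ∩ Y) = J ∩ (X ∩ Y) := by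
    ext x; simp [and_assoc]; tauto
  have hcard : (J ∩ X).ncard + (J ∩ Y).ncard = J.ncard + (J ∩ (X ∩ Y)).ncard := by
    rw [← ncard_union_add_ncard_inter (J ∩ X) (J ∩ Y) (hJfin.subset inter_subset_left)
      (hJfin.subset inter_subset_left), hunion, hinter]
  have hIcard : I.ncard ≤ (J ∩ (X ∩ Y)).ncard :=
    ncard_le_ncard hsub (hJfin.subset inter_subset_left)
  omega

end ModularAux

open ModularAux

/-- A flat `F` of a matroid `M` with finite ground set is modular if and only if for all
flats `G ⊆ H` one has `(F ∧ H) ∨ G = (F ∨ G) ∧ H` in the lattice of flats. -/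
theorem modular_flat_iff_meet_join {α : Type*} (M : Matroid α) [M.Finite]
    (F : Set α) (hF : M.IsFlat F) :
    (∀ G : Set α, M.IsFlat G → M.rk F + M.rk G = M.rk (F ∪ G) + M.rk (F ∩ G)) ↔
    (∀ G H : Set α, M.IsFlat G → M.IsFlat H → G ⊆ H →
      M.closure ((F ∩ H) ∪ G) = M.closure (F ∪ G) ∩ H) := by
  constructor
  · -- modular → lattice condition
    intro hmod G H hG hH hGH
    set K := M.closure ((F ∩ H) ∪ G) with hKdef
    set L := M.closure (F ∪ G) ∩ H with hLdef
    have hFG_ground : F ∪ G ⊆ M.E := union_subset hF.subset_ground hG.subset_ground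
    have hFHG_ground : (F ∩ H) ∪ G ⊆ M.E :=
      union_subset (inter_subset_left.trans hF.subset_ground) hG.subset_ground
    have hKflat : M.IsFlat K := closure_flat M _
    have hLflat : M.IsFlat L := flat_inter (closure_flat M _) hH
    have hFsub : F ⊆ M.closure (F ∪ G) := subset_union_left.trans (M.subset_closure _ hFG_ground)
    have hGsub : G ⊆ M.closure (F ∪ G) := subset_union_right.trans (M.subset_closure _ hFG_ground)
    have hKL : K ⊆ L := by
      rw [hKdef, ← hLflat.closure]
      apply M.closure_subset_closure
      exact union_subset (subset_inter (inter_subset_left.trans hFsub) inter_subset_right)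
        (subset_inter hGsub hGH)
    -- closures of F ∪ K and F ∪ L agree with closure (F ∪ G)
    have hGK : G ⊆ K := subset_union_right.trans (M.subset_closure _ hFHG_ground)
    have hFK1 : M.closure (F ∪ G) ⊆ M.closure (F ∪ K) :=
      M.closure_subset_closure (union_subset_union_right F hGK)
    have hFK2 : M.closure (F ∪ K) ⊆ M.closure (F ∪ L) :=
      M.closure_subset_closure (union_subset_union_right F hKL)
    have hFL : M.closure (F ∪ L) ⊆ M.closure (F ∪ G) := by
      have : F ∪ L ⊆ M.closure (F ∪ G) := union_subset hFsub inter_subset_left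
      calc M.closure (F ∪ L) ⊆ M.closure (M.closure (F ∪ G)) := M.closure_subset_closure this
        _ = M.closure (F ∪ G) := M.closure_closure _
    have hclKL : M.closure (F ∪ K) = M.closure (F ∪ L) :=
      (hFK2).antisymm (hFL.trans hFK1)
    -- F ∩ K = F ∩ L
    have hFH_K : F ∩ H ⊆ K :=
      subset_union_left.trans (M.subset_closure _ hFHG_ground)
    have hIKL : F ∩ K = F ∩ L := by
      apply (inter_subset_inter_right F hKL).antisymm
      intro x hx
      exact ⟨hx.1, hFH_K ⟨hx.1, hx.2.2⟩⟩
    have h1 := hmod K hKflat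
    have h2 := hmod L hLflat
    rw [rk_eq_of_closure_eq (M := M) hclKL, hIKL] at h1
    have hrk : M.rk L ≤ M.rk K := by omega
    exact flat_eq_of_subset_of_rk_le hKflat hLflat hKL hrk
  · -- lattice condition → modular
    intro hlat G hG
    refine le_antisymm ?_ (rk_submod F G)
    obtain ⟨I, hI⟩ := M.exists_isBasis (F ∩ G)
      (inter_subset_left.trans hF.subset_ground)
    obtain ⟨B, hB, hIB⟩ := hI.indep.subset_isBasis_of_subset
      (hI.subset.trans inter_subset_left) hF.subset_ground
    obtain ⟨J, hJ, hIJ⟩ := hI.indep.subset_isBasis_of_subset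
      (hI.subset.trans inter_subset_right) hG.subset_ground
    have hBJ_ground : B ∪ J ⊆ M.E :=
      union_subset hB.indep.subset_ground hJ.indep.subset_ground
    obtain ⟨C, hC, hBC⟩ := hB.indep.subset_isBasis_of_subset
      (subset_union_left (t := J)) hBJ_ground
    -- claim : B ∪ J is independent
    have hind : M.Indep (B ∪ J) := by
      by_contra hcon
      have hne : C ≠ B ∪ J := fun h ↦ hcon (h ▸ hC.indep)
      obtain ⟨e, heBJ, heC⟩ : ∃ e, e ∈ B ∪ J ∧ e ∉ C :=
        not_subset.1 fun h ↦ hne (hC.subset.antisymm h)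
      have heJ : e ∈ J := heBJ.resolve_left fun h ↦ heC (hBC h)
      have heE : e ∈ M.E := hJ.indep.subset_ground heJ
      have heclC : e ∈ M.closure C := hC.subset_closure heBJ
      -- set J' := C ∩ J
      set J' : Set α := C ∩ J with hJ'def
      have hCeq : C = B ∪ J' := by
        rw [hJ'def, union_inter_distrib_left, union_eq_right.2 hBC,
          inter_eq_left.2 hC.subset]
      have heJ' : e ∉ J' := fun h ↦ heC h.1
      -- apply the hypothesis with G₀ = closure J', H₀ = closure (insert e J')
      have hJ'G : J' ⊆ G := inter_subset_right.trans hJ.subset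
      have hJ'E : J' ⊆ M.E := hJ'G.trans hG.subset_ground
      have h := hlat (M.closure J') (M.closure (insert e J'))
        (closure_flat M _) (closure_flat M _)
        (M.closure_subset_closure (subset_insert _ _))
      have heH : e ∈ M.closure (insert e J') :=
        M.mem_closure_of_mem (mem_insert _ _) (insert_subset heE hJ'E)
      have heFG : e ∈ M.closure (F ∪ M.closure J') := by
        have h1 : e ∈ M.closure (F ∪ J') := by
          refine M.closure_subset_closure ?_ (hCeq ▸ heclC)
          exact union_subset_union_left J' hB.subset
        rw [closure_union_closure_right_eq]
        exact h1
      have heRHS : e ∈ M.closure ((F ∩ M.closure (insert e J')) ∪ M.closure J') := by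
        rw [h]; exact ⟨heFG, heH⟩
      -- F ∩ closure (insert e J') ⊆ closure J'
      have hkey : F ∩ M.closure (insert e J') ⊆ M.closure J' := by
        intro x hx
        have hxG : x ∈ G := by
          have : M.closure (insert e J') ⊆ G := by
            rw [← hG.closure]
            exact M.closure_subset_closure (insert_subset (hJ.subset heJ) hJ'G)
          exact this hx.2
        have hxFG : x ∈ F ∩ G := ⟨hx.1, hxG⟩
        have hxclI : x ∈ M.closure I := hI.subset_closure hxFG
        refine M.closure_subset_closure ?_ hxclI
        exact subset_inter (hIB.trans hBC) hIJ
      have heJ'cl : e ∈ M.closure J' := by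
        have : M.closure ((F ∩ M.closure (insert e J')) ∪ M.closure J') ⊆
            M.closure (M.closure J') := by
          apply M.closure_subset_closure
          exact union_subset hkey subset_rfl
        rw [M.closure_closure] at this
        exact this heRHS
      -- contradiction with independence of J
      have : e ∈ M.closure (J \ {e}) :=
        M.closure_subset_closure (subset_diff_singleton inter_subset_right heJ') heJ'cl
      exact hJ.indep.notMem_closure_diff_of_mem heJ this
    -- final counting
    have hBfin : B.Finite := M.set_finite B hB.indep.subset_ground
    have hJfin : J.Finite := M.set_finite J hJ.indep.subset_ground
    have h1 : M.rk F = B.ncard := rk_eq_ncard_of_basis' hB.isBasis'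
    have h2 : M.rk G = J.ncard := rk_eq_ncard_of_basis' hJ.isBasis'
    have h3 : (B ∪ J).ncard ≤ M.rk (F ∪ G) :=
      ncard_le_rk hind (union_subset_union hB.subset hJ.subset)
    have h4 : (B ∩ J).ncard ≤ M.rk (F ∩ G) :=
      ncard_le_rk (hind.subset (inter_subset_left.trans subset_union_left))
        (inter_subset_inter hB.subset hJ.subset)
    have hcard : (B ∪ J).ncard + (B ∩ J).ncard = B.ncard + J.ncard :=
      ncard_union_add_ncard_inter B J hBfin hJfin
    omega
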